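/- If G is systematic and d⊥ ≥ 3, then for every i ∈ {1,…,k}: δ_i^2 ≥ d⊥, where δ_i^2 is the second smallest weight of a codeword of C_i^⊥ with n+1 in its support. -/

import Mathlib

open Finset

/-- `R` is a recovery set for object `i`: the standard basis vector `e i` lies in the
span of the columns of `G` indexed by `R`. -/
def recSet {F : Type} [Field F] {k n : ℕ} (G : Matrix (Fin k) (Fin n) F)
    (i : Fin k) (R : Finset (Fin n)) : Prop :=
  (Pi.single i 1 : Fin k → F) ∈
    Submodule.span F ((fun j => fun r => G r j) '' (R : Set (Fin n)))

/-- A recovery `G`-system: each `Rs i` is a nonempty collection of recovery sets for object `i`. -/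
def recSystem {F : Type} [Field F] {k n : ℕ} (G : Matrix (Fin k) (Fin n) F)
    (Rs : Fin k → Finset (Finset (Fin n))) : Prop :=
  ∀ i, (Rs i).Nonempty ∧ ∀ R ∈ Rs i, recSet G i R

/-- Membership of a rate vector `lam` in the service rate region `Λ(Rs, μ)`:
there is a feasible allocation. -/
def inRegion {k n : ℕ} (Rs : Fin k → Finset (Finset (Fin n))) (μ : ℝ)
    (lam : Fin k → ℝ) : Prop :=
  ∃ a : Fin k → Finset (Fin n) → ℝ,
    (∀ i R, 0 ≤ a i R) ∧
    (∀ i, ∑ R ∈ Rs i, a i R = lam i) ∧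
    (∀ j : Fin n, ∑ i, ∑ R ∈ Rs i, (if j ∈ R then a i R else 0) ≤ μ)

/-- The dual of the code generated by `G` (the row space of `G`). -/
def dualCode {F : Type} [Field F] {k n : ℕ} (G : Matrix (Fin k) (Fin n) F) :
    Set (Fin n → F) :=
  {y | ∀ c ∈ Submodule.span F (Set.range (fun i => fun j => G i j)),
    ∑ j, y j * c j = 0}

/-- `G` is systematic: its first `k` columns form the `k × k` identity matrix. -/
def systematic {F : Type} [Field F] {k n : ℕ} (hkn : k ≤ n)
    (G : Matrix (Fin k) (Fin n) F) : Prop :=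
  ∀ i r : Fin k, G r (Fin.castLE hkn i) = if r = i then 1 else 0

/-- The `r`-th row of the matrix `G_i = (G | e_iᵀ)`, i.e. `G` with the `i`-th standard
basis vector appended as column `n+1`. -/
def GiRow {F : Type} [Field F] {k n : ℕ} (G : Matrix (Fin k) (Fin n) F) (i : Fin k)
    (r : Fin k) : Fin (n + 1) → F :=
  Fin.snoc (fun j => G r j) (if r = i then 1 else 0)

/-- The dual `C_i^⊥` of the code `C_i` generated by `G_i = (G | e_iᵀ)`. -/
def Ciperp {F : Type} [Field F] {k n : ℕ} (G : Matrix (Fin k) (Fin n) F) (i : Fin k) :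
    Set (Fin (n + 1) → F) :=
  {y | ∀ c ∈ Submodule.span F (Set.range (GiRow G i)), ∑ j, y j * c j = 0}

lemma ciperp_row {F : Type} [Field F] {k n : ℕ} {G : Matrix (Fin k) (Fin n) F}
    {i : Fin k} {x : Fin (n + 1) → F} (hx : x ∈ Ciperp G i) (r : Fin k) :
    ∑ j, x j * GiRow G i r j = 0 :=
  hx _ (Submodule.subset_span ⟨r, rfl⟩)

lemma delta1_ge_two {F : Type} [Field F] [DecidableEq F] {k n : ℕ}
    {G : Matrix (Fin k) (Fin n) F} {i : Fin k} {x : Fin (n + 1) → F}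
    (hx : x ∈ Ciperp G i) (hlast : x (Fin.last n) ≠ 0) :
    2 ≤ hammingNorm x := by
  by_contra h
  push_neg at h
  have hzero : ∀ j, j ≠ Fin.last n → x j = 0 := by
    intro j hj
    by_contra hxj
    have hsub : ({j, Fin.last n} : Finset (Fin (n+1))) ⊆
        Finset.filter (fun a => x a ≠ 0) Finset.univ := by
      intro a ha
      simp only [Finset.mem_insert, Finset.mem_singleton] at ha
      rcases ha with rfl | rfl <;> simp [Finset.mem_filter, hxj, hlast]
    have : 2 ≤ hammingNorm x := by
      have h2 := Finset.card_le_card hsub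
      rw [Finset.card_pair hj] at h2
      exact h2.trans_eq rfl
    omega
  have := ciperp_row hx i
  rw [Finset.sum_eq_single (Fin.last n)] at this
  · simp [GiRow, Fin.snoc_last] at this
    exact hlast this
  · intro b _ hb
    simp [hzero b hb]
  · simp


/-- if `G` is systematic and `d⊥ ≥ 3`, then `δ_i^2 ≥ d⊥`. -/
theorem delta2_ge_dual_dist {F : Type} [Field F] [Fintype F] [DecidableEq F] {k n : ℕ}
    (hkn : k ≤ n) (G : Matrix (Fin k) (Fin n) F)
    (hrank : G.rank = k) (hsys : systematic hkn G)
    (d : ℕ)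
    (hdmin : (∃ y ∈ dualCode G, y ≠ 0 ∧ hammingNorm y = d) ∧
      ∀ y ∈ dualCode G, y ≠ 0 → d ≤ hammingNorm y)
    (hd3 : 3 ≤ d)
    (i : Fin k) (δ1 δ2 : ℕ)
    (hδ1 : (∃ x ∈ Ciperp G i, x (Fin.last n) ≠ 0 ∧ hammingNorm x = δ1) ∧
      ∀ x ∈ Ciperp G i, x (Fin.last n) ≠ 0 → δ1 ≤ hammingNorm x)
    (hδ2 : (∃ x ∈ Ciperp G i, x (Fin.last n) ≠ 0 ∧ hammingNorm x = δ2 ∧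
        δ1 < hammingNorm x) ∧
      ∀ x ∈ Ciperp G i, x (Fin.last n) ≠ 0 → δ1 < hammingNorm x →
        δ2 ≤ hammingNorm x) :
    d ≤ δ2 := by
  -- δ1 ≥ 2
  obtain ⟨x1, hx1, hx1last, hx1norm⟩ := hδ1.1
  have hδ1ge2 : 2 ≤ δ1 := hx1norm ▸ delta1_ge_two hx1 hx1last
  -- witness for δ2
  obtain ⟨x, hx, hxlast, hxnorm, hxgt⟩ := hδ2.1
  have hδ2ge3 : 3 ≤ δ2 := by omega
  -- the punctured-and-corrected vector
  set c : Fin n := Fin.castLE hkn i with hc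
  set y : Fin n → F := fun j => x j.castSucc + (if j = c then x (Fin.last n) else 0)
    with hy
  -- y is orthogonal to every row of G
  have hrow : ∀ r : Fin k, ∑ j, y j * G r j = 0 := by
    intro r
    have h0 := ciperp_row hx r
    rw [Fin.sum_univ_castSucc] at h0
    simp only [GiRow, Fin.snoc_castSucc, Fin.snoc_last] at h0
    have h1 : ∑ j, y j * G r j =
        (∑ j, x j.castSucc * G r j) + x (Fin.last n) * G r c := by
      simp only [hy, add_mul, Finset.sum_add_distrib, ite_mul, zero_mul]
      rw [Finset.sum_ite_eq' Finset.univ c (fun j => x (Fin.last n) * G r j)]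
      simp
    rw [h1, hsys i r] at *
    rcases eq_or_ne r i with rfl | hri <;> simp_all <;> linarith [h0]
  have hydual : y ∈ dualCode G := by
    intro v hv
    induction hv using Submodule.span_induction with
    | mem v hv => obtain ⟨r, rfl⟩ := hv; exact hrow r
    | zero => simp
    | add a b _ _ ha hb => simp [mul_add, Finset.sum_add_distrib, ha, hb]
    | smul t a _ ha =>
        simp only [Pi.smul_apply, smul_eq_mul, mul_left_comm, ← Finset.mul_sum, ha,
          mul_zero]
  -- y ≠ 0
  have hyne : y ≠ 0 := by
    have hcard : 3 ≤ (Finset.filter (fun a => x a ≠ 0) Finset.univ : Finset (Fin (n+1))).card := by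
      rw [show (Finset.filter (fun a => x a ≠ 0) Finset.univ : Finset (Fin (n+1))).card = hammingNorm x from rfl,
        hxnorm]
      exact hδ2ge3
    have : ((Finset.filter (fun a => x a ≠ 0) Finset.univ : Finset (Fin (n+1))).erase (Fin.last n)).erase
        c.castSucc |>.Nonempty := by
      rw [← Finset.card_pos]
      have h1 := Finset.card_erase_le (a := Fin.last n)
        (s := (Finset.filter (fun a => x a ≠ 0) Finset.univ : Finset (Fin (n+1))))
      have h2 := Finset.pred_card_le_card_erase (a := Fin.last n)
        (s := (Finset.filter (fun a => x a ≠ 0) Finset.univ : Finset (Fin (n+1))))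
      have h3 := Finset.pred_card_le_card_erase (a := c.castSucc)
        (s := ((Finset.filter (fun a => x a ≠ 0) Finset.univ : Finset (Fin (n+1))).erase (Fin.last n)))
      omega
    obtain ⟨a, ha⟩ := this
    rw [Finset.mem_erase, Finset.mem_erase] at ha
    obtain ⟨hac, halast, haX⟩ := ha
    have haX' : x a ≠ 0 := by simpa using haX
    obtain ⟨j, rfl⟩ := Fin.exists_castSucc_eq.mpr halast
    have hjc : j ≠ c := fun h => hac (by rw [h])
    intro h0
    have : y j = 0 := congrFun h0 j
    simp [hy, hjc] at this
    exact haX' this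
  have hd : d ≤ hammingNorm y := hdmin.2 y hydual hyne
  -- hammingNorm y ≤ δ2 via an injection of supports
  have hinj : hammingNorm y ≤ hammingNorm x := by
    apply Finset.card_le_card_of_injOn
      (fun j => if j = c then Fin.last n else j.castSucc)
    · intro j hj
      simp only [Finset.mem_filter, Finset.mem_univ, true_and] at hj ⊢
      rcases eq_or_ne j c with rfl | hjc
      · simpa
      · simp only [if_neg hjc]
        simpa [hy, hjc] using hj
    · intro a _ b _ hab
      rcases eq_or_ne a c with rfl | hac <;> rcases eq_or_ne b c with rfl | hbc
      · rfl
      · simp only [if_pos rfl, if_neg hbc] at hab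
        exact absurd hab.symm (Fin.castSucc_lt_last b).ne
      · simp only [if_pos rfl, if_neg hac] at hab
        exact absurd hab (Fin.castSucc_lt_last a).ne
      · simp only [if_neg hac, if_neg hbc] at hab
        exact Fin.castSucc_injective n hab
  rw [hxnorm] at hinj
  omega
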